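/- Let m ≥ 1 and let F(x,y) = (yᵐ·g(x,y), f(x,y)) be holomorphic near the origin of ℂ² with g(0,0) ≠ 0, f(0,0) = 0, and suppose the complex Jacobian determinant of F is of the form y^{m−1}·u(x,y) with u(0,0) ≠ 0. Then there exist a neighborhood of the origin and a biholomorphism H of that neighborhood onto its image, with H(0,0) = (0,0), such that F = S_m ∘ H where S_m(x,y) = (xᵐ, y). -/

import Mathlib

open Complex Topology Filter

/-- A continuous linear map `ℂ×ℂ → ℂ×ℂ` with nonzero determinant is a continuous linear equiv. -/
lemma exists_clequiv (T : (ℂ × ℂ) →L[ℂ] ℂ × ℂ)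
    (hdet : (T (1, 0)).1 * (T (0, 1)).2 - (T (0, 1)).1 * (T (1, 0)).2 ≠ 0) :
    ∃ E : (ℂ × ℂ) ≃L[ℂ] ℂ × ℂ, (E : (ℂ × ℂ) →L[ℂ] ℂ × ℂ) = T := by
  set a := (T (1, 0)).1
  set b := (T (0, 1)).1
  set c := (T (1, 0)).2
  set d := (T (0, 1)).2
  set Δ := a * d - b * c with hΔ
  have hT : ∀ v : ℂ × ℂ, T v = (v.1 * a + v.2 * b, v.1 * c + v.2 * d) := by
    intro v
    have hv : v = v.1 • ((1 : ℂ), (0 : ℂ)) + v.2 • ((0 : ℂ), (1 : ℂ)) := by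
      simp [Prod.ext_iff]
    conv_lhs => rw [hv, map_add, map_smul, map_smul]
    simp [Prod.ext_iff, Prod.fst_add, Prod.snd_add, Prod.smul_fst, Prod.smul_snd,
      smul_eq_mul, a, b, c, d]
  set S : (ℂ × ℂ) →L[ℂ] ℂ × ℂ :=
    ((Δ⁻¹ * d) • ContinuousLinearMap.fst ℂ ℂ ℂ - (Δ⁻¹ * b) • ContinuousLinearMap.snd ℂ ℂ ℂ).prod
      ((-(Δ⁻¹ * c)) • ContinuousLinearMap.fst ℂ ℂ ℂ +
        (Δ⁻¹ * a) • ContinuousLinearMap.snd ℂ ℂ ℂ) with hS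
  have hSv : ∀ v : ℂ × ℂ, S v = (Δ⁻¹ * d * v.1 - Δ⁻¹ * b * v.2,
      -(Δ⁻¹ * c) * v.1 + Δ⁻¹ * a * v.2) := by
    intro v; simp [hS, smul_eq_mul]
  refine ⟨ContinuousLinearEquiv.equivOfInverse T S ?_ ?_, rfl⟩
  · intro v
    rw [hT, hSv]
    have : Δ ≠ 0 := hdet
    ext <;> field_simp <;> ring
  · intro v
    rw [hSv, hT]
    have : Δ ≠ 0 := hdet
    ext <;> field_simp <;> ring

lemma hasDerivAt_sliceX {φ : ℂ × ℂ → ℂ} {p : ℂ × ℂ} (hφ : AnalyticAt ℂ φ p) :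
    HasDerivAt (fun s => φ (s, p.2)) (fderiv ℂ φ p ((1 : ℂ), (0 : ℂ))) p.1 := by
  have h1 : HasDerivAt (fun s : ℂ => (s, p.2)) ((1 : ℂ), (0 : ℂ)) p.1 :=
    (hasDerivAt_id p.1).prodMk (hasDerivAt_const p.1 p.2)
  simpa [Function.comp_def] using hφ.differentiableAt.hasFDerivAt.comp_hasDerivAt p.1 h1

lemma hasDerivAt_sliceY {φ : ℂ × ℂ → ℂ} {p : ℂ × ℂ} (hφ : AnalyticAt ℂ φ p) :
    HasDerivAt (fun s => φ (p.1, s)) (fderiv ℂ φ p ((0 : ℂ), (1 : ℂ))) p.2 := by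
  have h1 : HasDerivAt (fun s : ℂ => (p.1, s)) ((0 : ℂ), (1 : ℂ)) p.2 :=
    (hasDerivAt_const p.2 p.1).prodMk (hasDerivAt_id p.2)
  simpa [Function.comp_def] using hφ.differentiableAt.hasFDerivAt.comp_hasDerivAt p.2 h1

/-- Local model of the resolved Jacobian map: if `F(x,y) = (yᵐ g, f)` with
`g(0,0) ≠ 0`, `f(0,0) = 0` and Jacobian determinant `y^{m-1} u` with `u(0,0) ≠ 0`,
then `F = S_m ∘ H` near the origin, where `S_m(x,y) = (xᵐ, y)` and `H` is a
biholomorphism onto its image fixing the origin. -/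
theorem local_model_Sm (m : ℕ) (hm : 1 ≤ m) (g f u : ℂ × ℂ → ℂ) (U : Set (ℂ × ℂ))
    (hUopen : IsOpen U) (hU0 : (0, 0) ∈ U)
    (hg : AnalyticOnNhd ℂ g U) (hf : AnalyticOnNhd ℂ f U) (hu : AnalyticOnNhd ℂ u U)
    (hg0 : g (0, 0) ≠ 0) (hf0 : f (0, 0) = 0) (hu0 : u (0, 0) ≠ 0)
    (hjac : ∀ p ∈ U,
      deriv (fun s => p.2 ^ m * g (s, p.2)) p.1 * deriv (fun s => f (p.1, s)) p.2 -
        deriv (fun s => s ^ m * g (p.1, s)) p.2 * deriv (fun s => f (s, p.2)) p.1 =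
      p.2 ^ (m - 1) * u p) :
    ∃ V ∈ nhds ((0, 0) : ℂ × ℂ), ∃ H Hinv : ℂ × ℂ → ℂ × ℂ,
      AnalyticOnNhd ℂ H V ∧ H (0, 0) = (0, 0) ∧ Set.InjOn H V ∧
      IsOpen (H '' V) ∧ AnalyticOnNhd ℂ Hinv (H '' V) ∧
      (∀ p ∈ V, Hinv (H p) = p) ∧
      (∀ p ∈ V, (p.2 ^ m * g p, f p) = ((H p).1 ^ m, (H p).2)) := by
  have hmC : (m : ℂ) ≠ 0 := Nat.cast_ne_zero.2 (by omega)
  set g0 := g (0, 0) with hg0def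
  set h : ℂ × ℂ → ℂ := fun p => Complex.exp ((Complex.log (g p / g0) + Complex.log g0) / m)
    with hhdef
  set W : Set (ℂ × ℂ) := U ∩ g ⁻¹' ((· / g0) ⁻¹' slitPlane) with hWdef
  have hWopen : IsOpen W :=
    hg.continuousOn.isOpen_inter_preimage hUopen
      (isOpen_slitPlane.preimage (continuous_id.div_const g0))
  have hW0 : ((0, 0) : ℂ × ℂ) ∈ W := by
    refine ⟨hU0, ?_⟩
    simp only [Set.mem_preimage, ← hg0def, div_self hg0]
    exact one_mem_slitPlane
  have hgne : ∀ p ∈ W, g p ≠ 0 := by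
    intro p hp h0
    have h2 := hp.2
    simp only [Set.mem_preimage, h0, zero_div] at h2
    exact Complex.zero_notMem_slitPlane h2
  -- h is an analytic m-th root of g on W
  have hh : AnalyticOnNhd ℂ h W := by
    intro p hp
    have h1 : AnalyticAt ℂ (fun q => g q / g0) p :=
      (hg p hp.1).div analyticAt_const hg0
    have h2 : AnalyticAt ℂ (fun q => Complex.log (g q / g0)) p :=
      AnalyticAt.comp (g := Complex.log) (f := fun q => g q / g0) (analyticAt_clog hp.2) h1
    exact ((h2.add analyticAt_const).div analyticAt_const hmC).cexp
  have hpow : ∀ p ∈ W, h p ^ m = g p := by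
    intro p hp
    have hgp := hgne p hp
    rw [hhdef]
    simp only []
    rw [← Complex.exp_nat_mul]
    have hcalc : (m : ℂ) * ((Complex.log (g p / g0) + Complex.log g0) / m) =
        Complex.log (g p / g0) + Complex.log g0 := by field_simp
    rw [hcalc, Complex.exp_add, Complex.exp_log (div_ne_zero hgp hg0), Complex.exp_log hg0,
      div_mul_cancel₀ _ hg0]
  have hhne : h (0, 0) ≠ 0 := Complex.exp_ne_zero _
  -- the map H
  set H : ℂ × ℂ → ℂ × ℂ := fun p => (p.2 * h p, f p) with hHdef
  have hH : AnalyticOnNhd ℂ H W := fun p hp => (analyticAt_snd.mul (hh p hp)).prod (hf p hp.1)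
  -- derivative of H at the origin
  have hhd : HasFDerivAt h (fderiv ℂ h (0, 0)) ((0, 0) : ℂ × ℂ) :=
    (hh _ hW0).differentiableAt.hasFDerivAt
  have hDf : HasFDerivAt f (fderiv ℂ f (0, 0)) ((0, 0) : ℂ × ℂ) :=
    (hf _ hU0).differentiableAt.hasFDerivAt
  have hP : HasFDerivAt (fun p : ℂ × ℂ => p.2 * h p)
      (h (0, 0) • ContinuousLinearMap.snd ℂ ℂ ℂ) ((0, 0) : ℂ × ℂ) := by
    have := (hasFDerivAt_snd (𝕜 := ℂ) (p := ((0, 0) : ℂ × ℂ))).fun_mul hhd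
    refine this.congr_fderiv ?_
    ext <;> simp
  have hHd : HasFDerivAt H
      ((h (0, 0) • ContinuousLinearMap.snd ℂ ℂ ℂ).prod (fderiv ℂ f (0, 0)))
      ((0, 0) : ℂ × ℂ) := hP.prodMk hDf
  have hfH0 : fderiv ℂ H ((0, 0) : ℂ × ℂ) =
      (h (0, 0) • ContinuousLinearMap.snd ℂ ℂ ℂ).prod (fderiv ℂ f (0, 0)) := hHd.fderiv
  have hent1 : fderiv ℂ H ((0, 0) : ℂ × ℂ) ((1 : ℂ), (0 : ℂ)) =
      (0, fderiv ℂ f (0, 0) ((1 : ℂ), (0 : ℂ))) := by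
    rw [hfH0]; simp
  have hent2 : fderiv ℂ H ((0, 0) : ℂ × ℂ) ((0 : ℂ), (1 : ℂ)) =
      (h (0, 0), fderiv ℂ f (0, 0) ((0 : ℂ), (1 : ℂ))) := by
    rw [hfH0]; simp
  -- ∂f/∂x (0,0) ≠ 0, from the Jacobian hypothesis
  set Φ : ℂ × ℂ → ℂ := fun p =>
    p.2 * fderiv ℂ g p ((1 : ℂ), (0 : ℂ)) * fderiv ℂ f p ((0 : ℂ), (1 : ℂ)) -
      ((m : ℂ) * g p + p.2 * fderiv ℂ g p ((0 : ℂ), (1 : ℂ))) *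
        fderiv ℂ f p ((1 : ℂ), (0 : ℂ)) - u p with hΦdef
  have hΦcont : ContinuousOn Φ U := by
    have cg := hg.fderiv.continuousOn
    have cf := hf.fderiv.continuousOn
    exact (((continuous_snd.continuousOn.mul (cg.clm_apply continuousOn_const)).mul
      (cf.clm_apply continuousOn_const)).sub
      (((continuousOn_const.mul hg.continuousOn).add
        (continuous_snd.continuousOn.mul (cg.clm_apply continuousOn_const))).mul
        (cf.clm_apply continuousOn_const))).sub hu.continuousOn
  have hΦzero : ∀ y : ℂ, y ≠ 0 → ((0 : ℂ), y) ∈ U → Φ (0, y) = 0 := by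
    intro y hy hyU
    have hgA := hg _ hyU
    have hfA := hf _ hyU
    have d1 : deriv (fun s => y ^ m * g (s, y)) 0 =
        y ^ m * fderiv ℂ g (0, y) ((1 : ℂ), (0 : ℂ)) := by
      have := ((hasDerivAt_sliceX hgA).const_mul (y ^ m)).deriv
      simpa using this
    have d2 : deriv (fun s => f ((0 : ℂ), s)) y = fderiv ℂ f (0, y) ((0 : ℂ), (1 : ℂ)) := by
      have := (hasDerivAt_sliceY hfA).deriv
      simpa using this
    have d3 : deriv (fun s => s ^ m * g ((0 : ℂ), s)) y =
        (m : ℂ) * y ^ (m - 1) * g (0, y) +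
          y ^ m * fderiv ℂ g (0, y) ((0 : ℂ), (1 : ℂ)) := by
      have := ((hasDerivAt_pow m y).fun_mul (hasDerivAt_sliceY hgA)).deriv
      simpa using this
    have d4 : deriv (fun s => f (s, y)) 0 = fderiv ℂ f (0, y) ((1 : ℂ), (0 : ℂ)) := by
      have := (hasDerivAt_sliceX hfA).deriv
      simpa using this
    have hj := hjac ((0 : ℂ), y) hyU
    simp only at hj
    rw [d1, d2, d3, d4] at hj
    have hym : y ^ m = y ^ (m - 1) * y := by
      rw [← pow_succ]; congr 1; omega
    rw [hym] at hj
    have hkey : y ^ (m - 1) * Φ (0, y) = 0 := by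
      rw [hΦdef]
      simp only []
      linear_combination hj
    rcases mul_eq_zero.1 hkey with h1 | h1
    · exact absurd h1 (pow_ne_zero _ hy)
    · exact h1
  have hΦ00 : Φ (0, 0) = 0 := by
    have hcy : Continuous (fun y : ℂ => ((0 : ℂ), y)) := continuous_const.prodMk continuous_id
    have hU' : ∀ᶠ y in 𝓝 (0 : ℂ), ((0 : ℂ), y) ∈ U :=
      hcy.continuousAt.preimage_mem_nhds (hUopen.mem_nhds hU0)
    have hcont : ContinuousAt (fun y : ℂ => Φ (0, y)) 0 := by
      have : ContinuousAt Φ ((0 : ℂ), (0 : ℂ)) :=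
        hΦcont.continuousAt (hUopen.mem_nhds hU0)
      exact this.comp hcy.continuousAt
    have t1 : Tendsto (fun y : ℂ => Φ (0, y)) (𝓝[≠] 0) (𝓝 (Φ (0, 0))) :=
      hcont.tendsto.mono_left nhdsWithin_le_nhds
    have t2 : Tendsto (fun y : ℂ => Φ (0, y)) (𝓝[≠] 0) (𝓝 0) := by
      apply Tendsto.congr' _ tendsto_const_nhds
      filter_upwards [eventually_nhdsWithin_of_eventually_nhds hU', self_mem_nhdsWithin]
        with y h1 h2
      exact (hΦzero y h2 h1).symm
    exact tendsto_nhds_unique t1 t2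
  have hfx0 : fderiv ℂ f (0, 0) ((1 : ℂ), (0 : ℂ)) ≠ 0 := by
    intro h0
    apply hu0
    have h' := hΦ00
    rw [hΦdef] at h'
    simp only [h0, mul_zero, zero_mul, zero_sub, sub_zero, zero_add, neg_eq_zero] at h'
    exact h'
  -- the determinant function of the derivative of H
  set Jdet : ℂ × ℂ → ℂ := fun p =>
    (fderiv ℂ H p ((1 : ℂ), (0 : ℂ))).1 * (fderiv ℂ H p ((0 : ℂ), (1 : ℂ))).2 -
      (fderiv ℂ H p ((0 : ℂ), (1 : ℂ))).1 * (fderiv ℂ H p ((1 : ℂ), (0 : ℂ))).2 with hJdef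
  have hJcont : ContinuousOn Jdet W := by
    have cH := hH.fderiv.continuousOn
    exact (((cH.clm_apply continuousOn_const).fst.mul
      (cH.clm_apply continuousOn_const).snd).sub
      ((cH.clm_apply continuousOn_const).fst.mul
        (cH.clm_apply continuousOn_const).snd))
  have hJ0 : Jdet (0, 0) ≠ 0 := by
    rw [hJdef]
    simp only [hent1, hent2]
    simp
    exact ⟨hhne, hfx0⟩
  set V' : Set (ℂ × ℂ) := W ∩ Jdet ⁻¹' {(0 : ℂ)}ᶜ with hV'def
  have hV'open : IsOpen V' :=
    hJcont.isOpen_inter_preimage hWopen isOpen_compl_singleton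
  have hV'0 : ((0, 0) : ℂ × ℂ) ∈ V' := ⟨hW0, hJ0⟩
  have hEquiv : ∀ p ∈ V', ∃ E : (ℂ × ℂ) ≃L[ℂ] ℂ × ℂ,
      (E : (ℂ × ℂ) →L[ℂ] ℂ × ℂ) = fderiv ℂ H p := by
    intro p hp
    exact exists_clequiv _ hp.2
  obtain ⟨E0, hE0⟩ := hEquiv _ hV'0
  have hstrict : HasStrictFDerivAt H (E0 : (ℂ × ℂ) →L[ℂ] ℂ × ℂ) ((0, 0) : ℂ × ℂ) := by
    rw [hE0]
    exact (hH _ hW0).hasStrictFDerivAt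
  set ph := HasStrictFDerivAt.toOpenPartialHomeomorph H hstrict with hphdef
  have hcoe : ⇑ph = H := hstrict.toOpenPartialHomeomorph_coe
  set V : Set (ℂ × ℂ) := ph.source ∩ V' with hVdef
  have hVopen : IsOpen V := ph.open_source.inter hV'open
  have hVmem : V ∈ nhds ((0, 0) : ℂ × ℂ) :=
    hVopen.mem_nhds ⟨hstrict.mem_toOpenPartialHomeomorph_source, hV'0⟩
  refine ⟨V, hVmem, H, ph.symm, ?_, ?_, ?_, ?_, ?_, ?_, ?_⟩
  · exact fun p hp => hH p hp.2.1
  · show ((0 : ℂ) * h (0, 0), f (0, 0)) = (0, 0)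
    rw [hf0, zero_mul]
  · rw [← hcoe]
    exact ph.injOn.mono Set.inter_subset_left
  · rw [← hcoe]
    exact ph.isOpen_image_of_subset_source hVopen Set.inter_subset_left
  · rintro q ⟨p, hp, rfl⟩
    obtain ⟨E, hE⟩ := hEquiv p hp.2
    have h1 : AnalyticAt ℂ (⇑ph) p := by rw [hcoe]; exact hH p hp.2.1
    have h2 : fderiv ℂ (⇑ph) p = (E : (ℂ × ℂ) →L[ℂ] ℂ × ℂ) := by
      rw [hcoe]; exact hE.symm
    have := ph.analyticAt_symm' hp.1 h1 h2
    rwa [hcoe] at this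
  · intro p hp
    rw [← hcoe]
    exact ph.left_inv hp.1
  · intro p hp
    have : (H p).1 = p.2 * h p := rfl
    rw [hHdef]
    simp only []
    rw [mul_pow, hpow p hp.2.1]
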